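/- arXiv:1102.2787 — 3 statements merged into one kernel-verified Lean document; each statement's English description precedes it below -/
import Mathlib

section
/- Let h₁, h₂, h₃ be real numbers with h₁² ≥ h₂² ≥ h₃² and let P > 0 satisfy h₂²·P > 1/2. Then [ C((h₂² + h₃²)·P) + C(min{(h₁² + h₃²)·P, (|h₂| + |h₃|)²·P}) ] − 2·C(h₂²·P − 1/2) ≤ 5/2. -/
/-- The Gaussian capacity function C(x) = (1/2)·log₂(1 + x). -/
noncomputable def Cap (x : ℝ) : ℝ := (1/2) * Real.logb 2 (1 + x)

lemma Cap_mono {x y : ℝ} (hx : -1 < x) (hxy : x ≤ y) : Cap x ≤ Cap y := by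
  unfold Cap
  have h1 : (0:ℝ) < 1 + x := by linarith
  have := Real.logb_le_logb_of_le (b:=2) (by norm_num) h1 (by linarith : 1 + x ≤ 1 + y)
  linarith

/-- Additive gap bound Γ_{a2} ≤ 5/2 for h₂²P > 1/2. -/
theorem additive_gap_high_power_const (h₁ h₂ h₃ P : ℝ)
    (h12 : h₁^2 ≥ h₂^2) (h23 : h₂^2 ≥ h₃^2) (hP : P > 0)
    (hhigh : h₂^2 * P > 1/2) :
    (Cap ((h₂^2 + h₃^2) * P)
        + Cap (min ((h₁^2 + h₃^2) * P) ((|h₂| + |h₃|)^2 * P)))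
      - 2 * Cap (h₂^2 * P - 1/2)
      ≤ 5/2 := by
  set a := h₂^2 * P with ha
  have h3P : h₃^2 * P ≤ a := mul_le_mul_of_nonneg_right h23 hP.le
  have habs : |h₃| ≤ |h₂| := by
    have := sq_abs h₂; have := sq_abs h₃
    nlinarith [abs_nonneg h₂, abs_nonneg h₃]
  have hx : (0:ℝ) < 1 + (a - 1/2) := by linarith
  -- bound first term
  have hb1 : Cap ((h₂^2 + h₃^2) * P) ≤ Cap (2 * a) := by
    apply Cap_mono
    · have : 0 ≤ (h₂^2 + h₃^2) * P := by positivity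
      linarith
    · nlinarith
  -- bound second term
  have hb2 : Cap (min ((h₁^2 + h₃^2) * P) ((|h₂| + |h₃|)^2 * P)) ≤ Cap (4 * a) := by
    apply Cap_mono
    · have h0 : 0 ≤ (h₁^2 + h₃^2) * P := by positivity
      have h0' : 0 ≤ (|h₂| + |h₃|)^2 * P := by positivity
      have := le_min h0 h0'
      linarith [this]
    · calc min ((h₁^2 + h₃^2) * P) ((|h₂| + |h₃|)^2 * P) ≤ (|h₂| + |h₃|)^2 * P :=
            min_le_right _ _
        _ ≤ 4 * a := by
            have h2a : (|h₂| + |h₃|)^2 ≤ 4 * h₂^2 := by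
              nlinarith [abs_nonneg h₂, abs_nonneg h₃, sq_abs h₂, sq_abs h₃]
            have := mul_le_mul_of_nonneg_right h2a hP.le
            rw [ha]; linarith
  -- Cap (2a) = 1/2 + Cap (a - 1/2)
  have he1 : Cap (2 * a) = 1/2 + Cap (a - 1/2) := by
    unfold Cap
    rw [show 1 + 2 * a = 2 * (1 + (a - 1/2)) by ring,
        Real.logb_mul (by norm_num) (ne_of_gt hx), Real.logb_self_eq_one (by norm_num : (1:ℝ) < 2)]
    ring
  -- Cap (4a) ≤ 1 + Cap (a - 1/2)
  have he2 : Cap (4 * a) ≤ 1 + Cap (a - 1/2) := by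
    have hle : Cap (4 * a) ≤ Cap (4 * a + 1) := by
      apply Cap_mono
      · nlinarith
      · linarith
    have heq : Cap (4 * a + 1) = 1 + Cap (a - 1/2) := by
      unfold Cap
      rw [show 1 + (4 * a + 1) = 4 * (1 + (a - 1/2)) by ring,
          Real.logb_mul (by norm_num) (ne_of_gt hx),
          show (4:ℝ) = 2^(2:ℕ) by norm_num, Real.logb_pow,
          Real.logb_self_eq_one (by norm_num : (1:ℝ) < 2)]
      ring
    linarith
  linarith
end

section
/- For every real number P ≥ 0, one has min{ 3·C(P), 2·C(2P) } − max{ min{ C(3P), (3/2)·C(P) }, 2·min{ max(C((3P)/2 − 1/2), 0), C(P) } } ≤ 1. -/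
lemma ldiff {a b : ℝ} (ha : 0 < a) (hab : a ≤ 2 * b) :
    Real.logb 2 a - Real.logb 2 b ≤ 1 := by
  have hb : 0 < b := by linarith
  have h1 : Real.logb 2 a ≤ Real.logb 2 (2 * b) :=
    Real.logb_le_logb_of_le (by norm_num) ha hab
  have h2 : Real.logb 2 (2 * b) = 1 + Real.logb 2 b := by
    rw [Real.logb_mul (by norm_num) (ne_of_gt hb), Real.logb_self_eq_one (by norm_num)]
  linarith

lemma cap_nonneg {x : ℝ} (hx : 0 ≤ x) : 0 ≤ Cap x := by
  unfold Cap
  have := Real.logb_nonneg (by norm_num : (1:ℝ) < 2) (by linarith : (1:ℝ) ≤ 1 + x)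
  linarith

/-- Gap of less than one bit for the symmetric Y-channel with P = P_r. -/
theorem symmetric_gap (P : ℝ) (hP : P ≥ 0) :
    min (3 * Cap P) (2 * Cap (2 * P))
      - max (min (Cap (3 * P)) ((3/2) * Cap P))
          (2 * min (max (Cap ((3 * P) / 2 - 1/2)) 0) (Cap P)) ≤ 1 := by
  rcases le_or_gt (1/3 : ℝ) P with h | h
  · -- P ≥ 1/3 : use FDF lower bound and 2C(2P) upper bound
    have h1 : min (3 * Cap P) (2 * Cap (2 * P)) ≤ 2 * Cap (2 * P) := min_le_right _ _
    have hmaxeq : max (Cap ((3 * P) / 2 - 1/2)) 0 = Cap ((3 * P) / 2 - 1/2) :=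
      max_eq_left (cap_nonneg (by linarith))
    have d1 : 2 * Cap (2 * P) - 2 * Cap P ≤ 1 := by
      unfold Cap
      have := ldiff (a := 1 + 2*P) (b := 1 + P) (by linarith) (by linarith)
      linarith
    have d2 : 2 * Cap (2 * P) - 2 * Cap ((3 * P) / 2 - 1/2) ≤ 1 := by
      unfold Cap
      have := ldiff (a := 1 + 2*P) (b := 1 + ((3*P)/2 - 1/2)) (by linarith) (by linarith)
      linarith
    have hm : Cap (2 * P) - 1/2 ≤ min (Cap ((3 * P) / 2 - 1/2)) (Cap P) :=
      le_min (by linarith) (by linarith)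
    have hmax := le_max_right (min (Cap (3 * P)) ((3/2) * Cap P))
      (2 * min (max (Cap ((3 * P) / 2 - 1/2)) 0) (Cap P))
    rw [hmaxeq] at hmax ⊢
    linarith
  · -- 0 ≤ P < 1/3 : use DF lower bound and 3C(P) upper bound
    have h1 : min (3 * Cap P) (2 * Cap (2 * P)) ≤ 3 * Cap P := min_le_left _ _
    have d1 : 3 * Cap P - Cap (3 * P) ≤ 1 := by
      unfold Cap
      have hpow : Real.logb 2 ((1+P)^3) = 3 * Real.logb 2 (1+P) := by
        rw [Real.logb_pow]; push_cast; ring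
      have := ldiff (a := (1+P)^3) (b := 1 + 3*P) (by positivity) (by nlinarith [mul_nonneg (mul_nonneg hP hP) hP, sq_nonneg P, mul_nonneg hP hP])
      linarith
    have d2 : (3/2) * Cap P ≤ 1 := by
      unfold Cap
      have := ldiff (a := 1 + P) (b := 1) (by linarith) (by linarith)
      have h0 : Real.logb 2 (1 : ℝ) = 0 := Real.logb_one
      have hn : 0 ≤ Real.logb 2 (1 + P) :=
        Real.logb_nonneg (by norm_num) (by linarith)
      linarith
    have hm : 3 * Cap P - 1 ≤ min (Cap (3 * P)) ((3/2) * Cap P) :=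
      le_min (by linarith) (by linarith)
    have hmax := le_max_left (min (Cap (3 * P)) ((3/2) * Cap P))
      (2 * min (max (Cap ((3 * P) / 2 - 1/2)) 0) (Cap P))
    linarith
end

section
/- Let h₁, h₂, h₃ be real numbers with h₁² ≥ h₂² ≥ h₃² and h₃ ≠ 0. Then there exists P₀ > 0 such that for all P ≥ P₀, C((h₂² + h₃²)·P) + C(min{(h₁² + h₃²)·P, (|h₂| + |h₃|)²·P}) < 2·C(h₂²·P) + C(h₃²·P). -/
lemma cap_mono {x y : ℝ} (hx : 0 ≤ x) (hxy : x ≤ y) : Cap x ≤ Cap y := by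
  unfold Cap
  have h1 : (0:ℝ) < 1 + x := by linarith
  have h2 : (1:ℝ) + x ≤ 1 + y := by linarith
  gcongr <;> first | norm_num | linarith

lemma cap_key {x y u w : ℝ} (hx : 0 ≤ x) (hy : 0 ≤ y) (hu : 0 ≤ u) (hw : 0 ≤ w)
    (h : (1 + x) * (1 + y) < (1 + u)^2 * (1 + w)) :
    Cap x + Cap y < 2 * Cap u + Cap w := by
  unfold Cap
  have hx1 : (0:ℝ) < 1 + x := by linarith
  have hy1 : (0:ℝ) < 1 + y := by linarith
  have hu1 : (0:ℝ) < 1 + u := by linarith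
  have hw1 : (0:ℝ) < 1 + w := by linarith
  have e1 : Real.logb 2 (1 + x) + Real.logb 2 (1 + y)
      = Real.logb 2 ((1 + x) * (1 + y)) := by
    rw [Real.logb_mul hx1.ne' hy1.ne']
  have e2 : 2 * Real.logb 2 (1 + u) + Real.logb 2 (1 + w)
      = Real.logb 2 ((1 + u)^2 * (1 + w)) := by
    rw [Real.logb_mul (pow_ne_zero 2 hu1.ne') hw1.ne', Real.logb_pow]
    push_cast; ring
  have hlt : Real.logb 2 ((1 + x) * (1 + y)) < Real.logb 2 ((1 + u)^2 * (1 + w)) :=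
    Real.logb_lt_logb (by norm_num) (by positivity) h
  linarith [e1, e2, hlt]

set_option maxHeartbeats 1000000 in
/-- The genie-aided bound is eventually strictly tighter than the cut-set bound. -/
theorem genie_tighter (h₁ h₂ h₃ : ℝ)
    (h12 : h₁^2 ≥ h₂^2) (h23 : h₂^2 ≥ h₃^2) (h₃ne : h₃ ≠ 0) :
    ∃ P₀ : ℝ, P₀ > 0 ∧ ∀ P : ℝ, P ≥ P₀ →
      Cap ((h₂^2 + h₃^2) * P)
          + Cap (min ((h₁^2 + h₃^2) * P) ((|h₂| + |h₃|)^2 * P))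
        < 2 * Cap (h₂^2 * P) + Cap (h₃^2 * P) := by
  set a := h₂^2 with ha
  set b := h₃^2 with hb
  have hbpos : 0 < b := by positivity
  have hapos : 0 < a := lt_of_lt_of_le hbpos h23
  have habs : |h₃| ≤ |h₂| := by
    rw [← Real.sqrt_sq_eq_abs, ← Real.sqrt_sq_eq_abs]
    exact Real.sqrt_le_sqrt h23
  have hs : (|h₂| + |h₃|)^2 ≤ 4 * a := by
    have h2 : (0:ℝ) ≤ |h₂| := abs_nonneg _
    have h3 : (0:ℝ) ≤ |h₃| := abs_nonneg _
    nlinarith [sq_abs h₂, mul_le_mul_of_nonneg_left habs h2]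
  refine ⟨max 1 ((6*a + 8*a^2 + 1) / (a^2 * b)), lt_of_lt_of_le one_pos (le_max_left _ _), ?_⟩
  intro P hP
  have hP1 : 1 ≤ P := le_trans (le_max_left _ _) hP
  have hPpos : 0 < P := lt_of_lt_of_le one_pos hP1
  have hP2 : (6*a + 8*a^2 + 1) / (a^2 * b) ≤ P := le_trans (le_max_right _ _) hP
  have hP3 : 6*a + 8*a^2 + 1 ≤ a^2 * b * P := by
    rw [div_le_iff₀ (by positivity)] at hP2
    linarith
  -- bound the min term
  have hmin : min ((h₁^2 + h₃^2) * P) ((|h₂| + |h₃|)^2 * P) ≤ (|h₂| + |h₃|)^2 * P :=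
    min_le_right _ _
  have hminnn : 0 ≤ min ((h₁^2 + h₃^2) * P) ((|h₂| + |h₃|)^2 * P) := by
    apply le_min <;> positivity
  have step1 : Cap (min ((h₁^2 + h₃^2) * P) ((|h₂| + |h₃|)^2 * P))
      ≤ Cap ((|h₂| + |h₃|)^2 * P) := cap_mono hminnn hmin
  have step2 : Cap ((a + b) * P) + Cap ((|h₂| + |h₃|)^2 * P)
      < 2 * Cap (a * P) + Cap (b * P) := by
    apply cap_key (by positivity) (by positivity) (by positivity) (by positivity)
    set s := (|h₂| + |h₃|)^2 with hsdef
    have hs0 : (0:ℝ) ≤ s := sq_nonneg _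
    have hPP : P ≤ P^2 := by nlinarith
    have l1 : (1 + (a + b) * P) * (1 + s * P) ≤ (1 + 2*a*P) * (1 + 4*a*P) := by
      apply mul_le_mul
      · nlinarith
      · nlinarith [mul_le_mul_of_nonneg_right hs hPpos.le]
      · nlinarith
      · nlinarith
    have l2 : (1 + 2*a*P) * (1 + 4*a*P) < (1 + a*P)^2 * (1 + b*P) := by
      have key : (6*a + 8*a^2 + 1) * P^2 ≤ a^2 * b * P^3 := by
        have h := mul_le_mul_of_nonneg_right hP3 (sq_nonneg P)
        linarith [h]
      have e : (1 + a*P)^2 * (1 + b*P) - (1 + 2*a*P) * (1 + 4*a*P)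
          = b*P - 4*a*P + (2*a*b - 7*a^2) * P^2 + a^2*b*P^3 := by ring
      have t1 : 6*a*P ≤ 6*a*P^2 := by
        have := mul_le_mul_of_nonneg_left hPP (by positivity : (0:ℝ) ≤ 6*a)
        linarith
      have t2 : (0:ℝ) ≤ 2*a*b*P^2 := by positivity
      have t3 : (0:ℝ) ≤ a^2*P^2 := by positivity
      have t4 : (0:ℝ) ≤ P^2 := sq_nonneg _
      have t5 : 0 < b*P := mul_pos hbpos hPpos
      have t6 : 0 < a*P := mul_pos hapos hPpos
      have pos : 0 < b*P - 4*a*P + (2*a*b - 7*a^2) * P^2 + a^2*b*P^3 := by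
        linarith [key, t1, t2, t3, t4, t5, t6]
      linarith [e, pos]
    linarith
  linarith
end
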